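/- Let F_ℓ satisfy Assumption: K is a closed convex cone with U0 = {u ∈ K : u_{K+1} = 1} nonempty and compact. Suppose also that for each i ∈ [I], min_{u ∈ U0} uᵀĈᵢu = 0 with Ĉᵢ symmetric. Then the dual copositive feasibility problem {(λ, α) : λ e_{K+1}e_{K+1}ᵀ + Σᵢ αᵢĈᵢ − Ĉ₀ ∈ COP(K)} admits a Slater point: there exist λ* ∈ ℝ and α = 0 such that uᵀ(λ* e_{K+1}e_{K+1}ᵀ − Ĉ₀)u > 0 for all nonzero u ∈ K. -/

import Mathlib

open Matrix

/-- Auxiliary: in a closed convex cone whose slice `{u ∈ C | u_last = 1}` is nonempty and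
compact, any element with last coordinate `0` must be `0`. -/
lemma aux_zero_stmt10 (K : ℕ) (C : Set (Fin (K + 1) → ℝ))
    (hconv : Convex ℝ C)
    (hcone : ∀ u ∈ C, ∀ t : ℝ, 0 ≤ t → t • u ∈ C)
    (hne : ({u ∈ C | u (Fin.last K) = 1} : Set (Fin (K + 1) → ℝ)).Nonempty)
    (hcompact : IsCompact ({u ∈ C | u (Fin.last K) = 1} : Set (Fin (K + 1) → ℝ)))
    (u : Fin (K + 1) → ℝ) (hu : u ∈ C) (hlast : u (Fin.last K) = 0) : u = 0 := by
  by_contra h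
  obtain ⟨v0, hv0C, hv0l⟩ := hne
  have hadd : ∀ x ∈ C, ∀ y ∈ C, x + y ∈ C := by
    intro x hx y hy
    have hmid : (1/2 : ℝ) • x + (1/2 : ℝ) • y ∈ C :=
      hconv hx hy (by norm_num) (by norm_num) (by norm_num)
    have := hcone _ hmid 2 (by norm_num)
    simpa [smul_smul, smul_add] using this
  obtain ⟨r, hr⟩ := hcompact.isBounded.exists_norm_le
  obtain ⟨i, hi⟩ : ∃ i, u i ≠ 0 := by
    by_contra hc; push_neg at hc; exact h (funext hc)
  have habs : 0 < |u i| := abs_pos.mpr hi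
  have hrn : 0 ≤ r := le_trans (norm_nonneg _) (hr _ ⟨hv0C, hv0l⟩)
  set t : ℝ := (r + |v0 i| + 1) / |u i| with ht
  have htpos : 0 ≤ t := by
    apply div_nonneg _ (le_of_lt habs)
    have := abs_nonneg (v0 i); linarith
  have hmem : v0 + t • u ∈ ({u ∈ C | u (Fin.last K) = 1} : Set (Fin (K + 1) → ℝ)) := by
    refine ⟨hadd _ hv0C _ (hcone _ hu t htpos), ?_⟩
    simp [hlast, hv0l]
  have hle := hr _ hmem
  have hcomp : |(v0 + t • u) i| ≤ ‖v0 + t • u‖ := by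
    simpa using norm_le_pi_norm (v0 + t • u) i
  have ht1 : t * |u i| = r + |v0 i| + 1 := by
    rw [ht, div_mul_cancel₀ _ (ne_of_gt habs)]
  have htri := abs_add_le ((v0 + t • u) i) (-(v0 i))
  rw [abs_neg] at htri
  have h2 : |(v0 + t • u) i + -v0 i| = t * |u i| := by
    simp [abs_mul, abs_of_nonneg htpos]
  linarith

theorem stmt10 (K I : ℕ) (C : Set (Fin (K + 1) → ℝ))
    (hclosed : IsClosed C) (hconv : Convex ℝ C)
    (hcone : ∀ u ∈ C, ∀ t : ℝ, 0 ≤ t → t • u ∈ C)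
    (hne : ({u ∈ C | u (Fin.last K) = 1} : Set (Fin (K + 1) → ℝ)).Nonempty)
    (hcompact : IsCompact ({u ∈ C | u (Fin.last K) = 1} : Set (Fin (K + 1) → ℝ)))
    (C0 : Matrix (Fin (K + 1)) (Fin (K + 1)) ℝ) (hC0 : C0.IsSymm)
    (Chat : Fin I → Matrix (Fin (K + 1)) (Fin (K + 1)) ℝ)
    (hChatSymm : ∀ i, (Chat i).IsSymm)
    (hChatMin : ∀ i, IsLeast
      ((fun u => u ⬝ᵥ (Chat i).mulVec u) '' {u ∈ C | u (Fin.last K) = 1}) 0) :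
    ∃ lam : ℝ, ∀ u ∈ C, u ≠ 0 →
      0 < u ⬝ᵥ ((lam • Matrix.vecMulVec (Pi.single (Fin.last K) 1) (Pi.single (Fin.last K) 1)
        - C0).mulVec u) := by
  -- the continuous quadratic form is bounded above on the compact slice
  have hcont : Continuous fun v : Fin (K + 1) → ℝ => v ⬝ᵥ C0.mulVec v := by
    continuity
  obtain ⟨M, hM⟩ : ∃ M, ∀ v ∈ ({u ∈ C | u (Fin.last K) = 1} : Set (Fin (K + 1) → ℝ)),
      v ⬝ᵥ C0.mulVec v ≤ M := by
    obtain ⟨vmax, _, hmax⟩ := hcompact.exists_isMaxOn hne hcont.continuousOn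
    exact ⟨vmax ⬝ᵥ C0.mulVec vmax, fun v hv => hmax hv⟩
  refine ⟨M + 1, fun u hu hu0 => ?_⟩
  set c : ℝ := u (Fin.last K) with hc
  have hc0 : c ≠ 0 := fun h =>
    hu0 (aux_zero_stmt10 K C hconv hcone hne hcompact u hu h)
  -- decompose u = c • v with v in the slice
  obtain ⟨v, hv, huv⟩ : ∃ v ∈ ({u ∈ C | u (Fin.last K) = 1} : Set (Fin (K + 1) → ℝ)),
      u = c • v := by
    rcases lt_or_gt_of_ne hc0 with hneg | hpos
    · obtain ⟨v0, hv0C, hv0l⟩ := hne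
      have h1 : (-c) • v0 ∈ C := hcone _ hv0C _ (by linarith)
      have hw : u + (-c) • v0 ∈ C := by
        have hmid : (1/2 : ℝ) • u + (1/2 : ℝ) • ((-c) • v0) ∈ C :=
          hconv hu h1 (by norm_num) (by norm_num) (by norm_num)
        have := hcone _ hmid 2 (by norm_num)
        simpa [smul_smul, smul_add] using this
      have hwl : (u + (-c) • v0) (Fin.last K) = 0 := by
        simp [hv0l, ← hc]
      have hw0 := aux_zero_stmt10 K C hconv hcone ⟨v0, hv0C, hv0l⟩ hcompact _ hw hwl
      refine ⟨v0, ⟨hv0C, hv0l⟩, ?_⟩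
      have : u = -((-c) • v0) := by
        rw [eq_neg_iff_add_eq_zero]; exact hw0
      simpa using this
    · refine ⟨c⁻¹ • u, ⟨hcone _ hu _ (by positivity), ?_⟩, ?_⟩
      · simp [← hc]; field_simp
      · rw [smul_smul]; field_simp; rw [one_smul]
  have hvl : v (Fin.last K) = 1 := hv.2
  -- compute the quadratic form at v
  have hEvv : v ⬝ᵥ (vecMulVec (Pi.single (Fin.last K) (1:ℝ))
      (Pi.single (Fin.last K) 1)).mulVec v = 1 := by
    simp [mulVec, vecMulVec_apply, dotProduct, Pi.single_apply, ite_mul, mul_ite,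
      Finset.sum_ite_eq', hvl]
  have key : u ⬝ᵥ (((M+1) • Matrix.vecMulVec (Pi.single (Fin.last K) 1)
        (Pi.single (Fin.last K) 1) - C0).mulVec u)
      = c^2 * ((M+1) - v ⬝ᵥ C0.mulVec v) := by
    rw [huv, mulVec_smul, dotProduct_smul, smul_dotProduct, sub_mulVec,
      dotProduct_sub, smul_mulVec, dotProduct_smul, hEvv]
    simp only [smul_eq_mul]
    ring
  rw [key]
  have hle := hM v hv
  have hcsq : (0:ℝ) < c^2 := by positivity
  nlinarith
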